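/- Let f_{2m} be the lowest-degree homogeneous part of a polynomial f ∈ R[x_1,...,x_n], of degree 2m. If f_{2m} lies in the relative interior of the cone of sums of squares of homogeneous polynomials of degree m (within its linear span), then f is a sum of squares of formal power series. -/

import Mathlib

open MvPolynomial

/-- Algebraic characterization of membership in the relative interior of a convex set `C`:
`x ∈ C` and every segment from a point of `C` to `x` can be prolonged beyond `x` within `C`. -/
def MemRint {V : Type*} [AddCommGroup V] [Module ℝ V] (C : Set V) (x : V) : Prop :=
  x ∈ C ∧ ∀ y ∈ C, ∃ μ : ℝ, 1 < μ ∧ μ • x + (1 - μ) • y ∈ C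

/-- The cone of sums of squares of homogeneous polynomials of degree `m`. -/
def sosFormsCone (n m : ℕ) : Set (MvPolynomial (Fin n) ℝ) :=
  {p | ∃ l : Multiset (MvPolynomial (Fin n) ℝ),
    (∀ q ∈ l, q.IsHomogeneous m) ∧ p = (l.map (· ^ 2)).sum}

section Auxiliary

open Finsupp



lemma Finsupp.degree_add' {σ : Type*} (a b : σ →₀ ℕ) :
    (a + b).degree = a.degree + b.degree := by
  simp [degree_eq_weight_one, map_add]

variable {σ : Type*} [DecidableEq σ]

lemma deg_lt_of_mem_anti {α : σ →₀ ℕ} {p : (σ →₀ ℕ) × (σ →₀ ℕ)}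
    (hp : p ∈ Finset.HasAntidiagonal.antidiagonal α) (h1 : p.1 ≠ 0) (h2 : p.2 ≠ 0) :
    p.1.degree < α.degree ∧ p.2.degree < α.degree := by
  rw [Finset.HasAntidiagonal.mem_antidiagonal] at hp
  have := Finsupp.degree_add' p.1 p.2
  rw [hp] at this
  have d1 : 0 < p.1.degree := Nat.pos_of_ne_zero (fun h => h1 ((_root_.Finsupp.degree_eq_zero_iff _).mp h))
  have d2 : 0 < p.2.degree := Nat.pos_of_ne_zero (fun h => h2 ((_root_.Finsupp.degree_eq_zero_iff _).mp h))
  omega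

noncomputable def sqrtAux (u : (σ →₀ ℕ) → ℝ) (a : ℝ) : (σ →₀ ℕ) → ℝ :=
  fun α =>
    if h : α = 0 then a
    else (u α - ∑ p ∈ ((Finset.HasAntidiagonal.antidiagonal α).filter
        (fun p => p.1 ≠ 0 ∧ p.2 ≠ 0)).attach,
        sqrtAux u a p.1.1 * sqrtAux u a p.1.2) / (2 * a)
  termination_by α => α.degree
  decreasing_by
  all_goals {
    have hm := p.2
    rw [Finset.mem_filter] at hm
    first
    | exact (deg_lt_of_mem_anti hm.1 hm.2.1 hm.2.2).1
    | exact (deg_lt_of_mem_anti hm.1 hm.2.1 hm.2.2).2 }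

lemma sqrtAux_spec (u : (σ →₀ ℕ) → ℝ) (a : ℝ) {α : σ →₀ ℕ} (hα : α ≠ 0) :
    sqrtAux u a α = (u α - ∑ p ∈ ((Finset.HasAntidiagonal.antidiagonal α).filter
        (fun p => p.1 ≠ 0 ∧ p.2 ≠ 0)), sqrtAux u a p.1 * sqrtAux u a p.2) / (2 * a) := by
  have h := Finset.sum_attach ((Finset.HasAntidiagonal.antidiagonal α).filter (fun p => p.1 ≠ 0 ∧ p.2 ≠ 0))
    (fun p => sqrtAux u a p.1 * sqrtAux u a p.2)
  rw [sqrtAux, dif_neg hα, h]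

lemma sqrtAux_zero (u : (σ →₀ ℕ) → ℝ) (a : ℝ) : sqrtAux u a 0 = a := by
  rw [sqrtAux]; simp

theorem isSquare_of_pos_constCoeff (u : MvPowerSeries σ ℝ)
    (hu : 0 < MvPowerSeries.constantCoeff (σ := σ) (R := ℝ) u) : IsSquare u := by
  set a := Real.sqrt (MvPowerSeries.constantCoeff (σ := σ) (R := ℝ) u) with ha
  have ha0 : 0 < a := Real.sqrt_pos.mpr hu
  have haa : a * a = MvPowerSeries.constantCoeff (σ := σ) (R := ℝ) u := Real.mul_self_sqrt hu.le
  have hc : ∀ β, MvPowerSeries.coeff β (sqrtAux u a : MvPowerSeries σ ℝ) = sqrtAux u a β :=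
    fun _ => rfl
  have hc0 : MvPowerSeries.constantCoeff (sqrtAux u a : MvPowerSeries σ ℝ) = a := sqrtAux_zero u a
  refine ⟨(sqrtAux u a : MvPowerSeries σ ℝ), ?_⟩
  ext α
  erw [MvPowerSeries.coeff_mul]
  by_cases hα : α = 0
  · subst hα
    rw [Finset.HasAntidiagonal.antidiagonal_zero, Finset.sum_singleton]
    simpa [sqrtAux_zero u a, hc, hc0] using haa.symm
  · set s₁ := (Finset.HasAntidiagonal.antidiagonal α).filter (fun p => p.1 ≠ 0 ∧ p.2 ≠ 0) with hs₁
    have hsplit : Finset.HasAntidiagonal.antidiagonal α =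
        insert ((0 : σ →₀ ℕ), α) (insert (α, (0 : σ →₀ ℕ)) s₁) := by
      ext p
      simp only [Finset.mem_insert, Finset.mem_filter, Finset.HasAntidiagonal.mem_antidiagonal, hs₁]
      constructor
      · intro hp
        by_cases h1 : p.1 = 0
        · left; rw [Prod.ext_iff]; exact ⟨h1, by rw [← hp, h1, zero_add]⟩
        · by_cases h2 : p.2 = 0
          · right; left; rw [Prod.ext_iff]; exact ⟨by rw [← hp, h2, add_zero], h2⟩
          · right; right; exact ⟨hp, h1, h2⟩
      · rintro (h | h | h)
        · rw [h]; simp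
        · rw [h]; simp
        · exact h.1
    have h1 : ((0 : σ →₀ ℕ), α) ∉ insert (α, (0 : σ →₀ ℕ)) s₁ := by
      intro hmem
      rcases Finset.mem_insert.mp hmem with h | h
      · exact hα (congrArg Prod.snd h)
      · rw [hs₁, Finset.mem_filter] at h
        exact h.2.1 rfl
    have h2 : (α, (0 : σ →₀ ℕ)) ∉ s₁ := by
      rw [hs₁, Finset.mem_filter]
      exact fun h => h.2.2 rfl
    rw [hsplit, Finset.sum_insert h1, Finset.sum_insert h2]
    simp only [MvPowerSeries.coeff_apply, hc]
    simp only [sqrtAux_zero u a, sqrtAux_spec u a hα, ← hs₁]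
    field_simp
    ring



lemma Finsupp.degree_add'' {σ : Type*} (a b : σ →₀ ℕ) :
    (a + b).degree = a.degree + b.degree := by
  simp [degree_eq_weight_one, map_add]

lemma Finsupp.degree_single'' {σ : Type*} (i : σ) (k : ℕ) :
    (Finsupp.single i k).degree = k := by
  by_cases hk : k = 0
  · simp [hk]
  · exact Finsupp.degree_single i k

lemma exists_le_of_degree_le {σ : Type*} [DecidableEq σ] (α : σ →₀ ℕ) (k : ℕ)
    (hk : k ≤ α.degree) : ∃ β : σ →₀ ℕ, β ≤ α ∧ β.degree = k := by
  induction k with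
  | zero => exact ⟨0, zero_le, map_zero _⟩
  | succ k ih =>
    obtain ⟨β, hβle, hβdeg⟩ := ih (Nat.le_of_succ_le hk)
    have hne : β ≠ α := by
      intro h
      rw [h] at hβdeg
      omega
    have : ∃ i, β i < α i := by
      by_contra hcon
      push_neg at hcon
      exact hne (Finsupp.ext fun i => le_antisymm (Finsupp.le_def.mp hβle i) (hcon i))
    obtain ⟨i, hi⟩ := this
    refine ⟨β + Finsupp.single i 1, ?_, ?_⟩
    · rw [Finsupp.le_def]
      intro j
      rcases eq_or_ne j i with rfl | hj
      · simpa [Finsupp.add_apply, Finsupp.single_apply] using hi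
      · simpa [Finsupp.add_apply, Finsupp.single_apply, hj.symm] using Finsupp.le_def.mp hβle j
    · rw [Finsupp.degree_add'', hβdeg, Finsupp.degree_single'']

theorem IsSumSq.mul'' {R : Type*} [CommSemiring R] {a b : R} (ha : IsSumSq a)
    (hb : IsSumSq b) : IsSumSq (a * b) := by
  induction ha with
  | zero => simpa using IsSumSq.zero
  | sq_add x hS ih =>
    rw [add_mul]
    refine IsSumSq.add ?_ ih
    clear ih hS
    induction hb with
    | zero => simpa using IsSumSq.zero
    | sq_add y hT ihT =>
      rw [mul_add]
      refine IsSumSq.add ?_ ihT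
      have : x * x * (y * y) = (x * y) * (x * y) := by ring
      rw [this, ← add_zero ((x*y)*(x*y))]
      exact IsSumSq.sq_add _ IsSumSq.zero

theorem IsSquare.isSumSq'' {R : Type*} [Mul R] [AddMonoid R] {a : R} (h : IsSquare a) :
    IsSumSq a := by
  obtain ⟨r, rfl⟩ := h
  rw [← add_zero (r * r)]
  exact IsSumSq.sq_add _ IsSumSq.zero

section PerMonomial

variable {n m : ℕ}

lemma perMonomial (n m : ℕ) (α : Fin n →₀ ℕ) (hα : 2 * m < α.degree) :
    ∃ β β' : Fin n →₀ ℕ, β.degree = m ∧ β'.degree = m ∧ ∀ (c δ : ℝ), 0 < δ →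
      IsSumSq ((δ • ((monomial (β + β)) (1:ℝ) + (monomial (β' + β')) (1:ℝ))
        + (monomial α) c : MvPolynomial (Fin n) ℝ) : MvPowerSeries (Fin n) ℝ) := by
  obtain ⟨β, hβle, hβdeg⟩ := exists_le_of_degree_le α m (by omega)
  set γ := α - β with hγdef
  have hβγ : β + γ = α := by
    rw [hγdef, add_tsub_cancel_of_le hβle]
  have hγdeg : γ.degree = α.degree - m := by
    have := Finsupp.degree_add'' β γ
    rw [hβγ, hβdeg] at this
    omega
  obtain ⟨β', hβ'le, hβ'deg⟩ := exists_le_of_degree_le γ m (by omega)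
  set τ := γ - β' with hτdef
  have hβ'τ : β' + τ = γ := by rw [hτdef, add_tsub_cancel_of_le hβ'le]
  have hτne : τ ≠ 0 := by
    intro h
    have := Finsupp.degree_add'' β' τ
    rw [hβ'τ, h, map_zero, hβ'deg] at this
    omega
  refine ⟨β, β', hβdeg, hβ'deg, fun c δ hδ => ?_⟩
  -- notation
  set s := Real.sqrt δ with hs
  have hs0 : 0 < s := Real.sqrt_pos.mpr hδ
  have hss : s * s = δ := Real.mul_self_sqrt hδ.le
  set r := c / (2 * s) with hr
  set e := c ^ 2 / (4 * δ) with he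
  set Mβ := (MvPowerSeries.monomial β) (1:ℝ) with hMβ
  set Mγ := (MvPowerSeries.monomial γ) (1:ℝ) with hMγ
  set Mβ' := (MvPowerSeries.monomial β') (1:ℝ) with hMβ'
  set Mττ := (MvPowerSeries.monomial (τ + τ)) (1:ℝ) with hMττ
  set Mα := (MvPowerSeries.monomial α) (1:ℝ) with hMα
  set Mββ := (MvPowerSeries.monomial (β + β)) (1:ℝ) with hMββ
  set Mγγ := (MvPowerSeries.monomial (γ + γ)) (1:ℝ) with hMγγ
  set Mbb := (MvPowerSeries.monomial (β' + β')) (1:ℝ) with hMbb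
  set CC := MvPowerSeries.C (σ := Fin n) (R := ℝ) with hCC
  -- the square root W of C δ - C e * Mττ
  have hupos : 0 < MvPowerSeries.constantCoeff (σ := Fin n) (R := ℝ) (CC δ - CC e * Mττ) := by
    rw [map_sub, map_mul, hCC, MvPowerSeries.constantCoeff_C, MvPowerSeries.constantCoeff_C, hMττ]
    have : MvPowerSeries.constantCoeff (σ := Fin n) (R := ℝ) ((MvPowerSeries.monomial (τ + τ)) (1:ℝ)) = 0 := by
      rw [← MvPowerSeries.coeff_zero_eq_constantCoeff_apply, MvPowerSeries.coeff_monomial,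
        if_neg]
      intro h
      apply hτne
      ext i
      have := DFunLike.congr_fun h i
      simp only [Finsupp.add_apply, Finsupp.coe_zero, Pi.zero_apply] at this ⊢
      omega
    rw [this, mul_zero, sub_zero]
    exact hδ
  obtain ⟨W, hW⟩ := isSquare_of_pos_constCoeff _ hupos
  -- ring identities
  have hmul : ∀ (a b : Fin n →₀ ℕ) (x y : ℝ), (MvPowerSeries.monomial a) x *
      (MvPowerSeries.monomial b) y = (MvPowerSeries.monomial (a + b)) (x * y) :=
    fun a b x y => MvPowerSeries.monomial_mul_monomial a b x y
  have h1 : Mβ * Mγ = Mα := by rw [hMβ, hMγ, hmul, one_mul, hβγ, hMα]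
  have h2 : Mβ * Mβ = Mββ := by rw [hMβ, hmul, one_mul, hMββ]
  have h3 : Mγ * Mγ = Mγγ := by rw [hMγ, hmul, one_mul, hMγγ]
  have h4 : Mβ' * Mβ' = Mbb := by rw [hMβ', hmul, one_mul, hMbb]
  have h6 : Mbb * Mττ = Mγγ := by
    rw [hMbb, hMττ, hmul, one_mul, hMγγ]
    congr 1
    rw [← hβ'τ]
    abel
  have hsC : CC s * CC s = CC δ := by rw [← map_mul, hss]
  have hs0' : s ≠ 0 := ne_of_gt hs0
  have hrC : CC s * CC r + CC s * CC r = CC c := by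
    have hsc : s * r + s * r = c := by rw [hr]; field_simp; ring
    rw [← map_mul, ← map_add, hsc]
  have heC : CC r * CC r = CC e := by
    rw [← map_mul]
    congr 1
    rw [hr, he, ← hss]
    field_simp
    ring
  -- the two squares
  set P := CC s * Mβ + CC r * Mγ with hP
  set Q := Mβ' * W with hQ
  have hPP : P * P = CC δ * Mββ + CC c * Mα + CC e * Mγγ := by
    have expand : P * P = (CC s * CC s) * (Mβ * Mβ) + (CC s * CC r + CC s * CC r) * (Mβ * Mγ)
        + (CC r * CC r) * (Mγ * Mγ) := by rw [hP]; ring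
    rw [expand, h1, h2, h3, hsC, hrC, heC]
  have hQQ : Q * Q = CC δ * Mbb - CC e * Mγγ := by
    have expand : Q * Q = (Mβ' * Mβ') * (W * W) := by rw [hQ]; ring
    rw [expand, h4, ← hW]
    have h7 : Mbb * (CC δ - CC e * Mττ) = CC δ * Mbb - CC e * (Mbb * Mττ) := by ring
    rw [h7, h6]
  -- coercion of the polynomial
  have hcoe : ((δ • ((monomial (β + β)) (1:ℝ) + (monomial (β' + β')) (1:ℝ))
        + (monomial α) c : MvPolynomial (Fin n) ℝ) : MvPowerSeries (Fin n) ℝ)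
      = CC δ * (Mββ + Mbb) + CC c * Mα := by
    rw [MvPolynomial.smul_eq_C_mul, MvPolynomial.coe_add, MvPolynomial.coe_mul,
      MvPolynomial.coe_add, MvPolynomial.coe_C, MvPolynomial.coe_monomial,
      MvPolynomial.coe_monomial, MvPolynomial.coe_monomial]
    rw [hMββ, hMbb, hMα, hCC]
    congr 1
    rw [← MvPowerSeries.monomial_zero_eq_C_apply, hmul, zero_add, mul_one]
  have key : ((δ • ((monomial (β + β)) (1:ℝ) + (monomial (β' + β')) (1:ℝ))
        + (monomial α) c : MvPolynomial (Fin n) ℝ) : MvPowerSeries (Fin n) ℝ)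
      = P * P + (Q * Q + 0) := by
    rw [hcoe, hPP, hQQ]
    ring
  rw [key]
  exact IsSumSq.sq_add P (IsSumSq.sq_add Q IsSumSq.zero)

end PerMonomial

lemma multiset_sq_sum_isSumSq (n : ℕ) (l : Multiset (MvPolynomial (Fin n) ℝ)) :
    IsSumSq (((l.map (· ^ 2)).sum : MvPolynomial (Fin n) ℝ) : MvPowerSeries (Fin n) ℝ) := by
  induction l using Multiset.induction with
  | empty => simpa [MvPolynomial.coe_zero] using IsSumSq.zero
  | cons a l ih =>
    rw [Multiset.map_cons, Multiset.sum_cons, MvPolynomial.coe_add, MvPolynomial.coe_pow,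
      pow_two]
    exact IsSumSq.sq_add _ ih

lemma cone_coe_isSumSq {n m : ℕ} {p : MvPolynomial (Fin n) ℝ} (hp : p ∈ sosFormsCone n m) :
    IsSumSq ((p : MvPolynomial (Fin n) ℝ) : MvPowerSeries (Fin n) ℝ) := by
  obtain ⟨l, -, rfl⟩ := hp
  exact multiset_sq_sum_isSumSq n l

end Auxiliary

/-- If the lowest homogeneous part `f_{2m}` of `f` lies in the relative interior of the cone of
sums of squares of degree-`m` forms, then `f` is a sum of squares of formal power series. -/
theorem sos_powerSeries_of_rint_lowest_part (n m : ℕ) (f : MvPolynomial (Fin n) ℝ)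
    (hlow : ∀ j, j < 2 * m → MvPolynomial.homogeneousComponent j f = 0)
    (hne : MvPolynomial.homogeneousComponent (2 * m) f ≠ 0)
    (hrint : MemRint (sosFormsCone n m) (MvPolynomial.homogeneousComponent (2 * m) f)) :
    IsSumSq (f : MvPowerSeries (Fin n) ℝ) := by
  classical
  set F2 := MvPolynomial.homogeneousComponent (2 * m) f with hF2
  set g := f - F2 with hg
  have hgsupp : ∀ α ∈ g.support, 2 * m < α.degree := by
    intro α hα
    rw [MvPolynomial.mem_support_iff] at hα
    by_contra hcon
    push_neg at hcon
    apply hα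
    have hcg : MvPolynomial.coeff α g = MvPolynomial.coeff α f - MvPolynomial.coeff α F2 := by
      rw [hg, MvPolynomial.coeff_sub]
    rcases eq_or_lt_of_le hcon with heq | hlt
    · rw [hcg, hF2, MvPolynomial.coeff_homogeneousComponent, if_pos heq, sub_self]
    · have h1 : MvPolynomial.coeff α F2 = 0 := by
        rw [hF2, MvPolynomial.coeff_homogeneousComponent, if_neg (Nat.ne_of_lt hlt)]
      have h2 : MvPolynomial.coeff α f = 0 := by
        have h3 := hlow α.degree hlt
        have h4 : MvPolynomial.coeff α (MvPolynomial.homogeneousComponent α.degree f)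
            = MvPolynomial.coeff α f := by
          rw [MvPolynomial.coeff_homogeneousComponent, if_pos rfl]
        rw [h3] at h4
        simpa using h4.symm
      rw [hcg, h1, h2, sub_zero]
  have hchoice : ∀ α : Fin n →₀ ℕ, ∃ β β' : Fin n →₀ ℕ, 2 * m < α.degree →
      (β.degree = m ∧ β'.degree = m ∧ ∀ (c δ : ℝ), 0 < δ →
      IsSumSq ((δ • ((monomial (β + β)) (1:ℝ) + (monomial (β' + β')) (1:ℝ))
        + (monomial α) c : MvPolynomial (Fin n) ℝ) : MvPowerSeries (Fin n) ℝ)) := by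
    intro α
    by_cases h : 2 * m < α.degree
    · obtain ⟨β, β', h1, h2, h3⟩ := perMonomial n m α h
      exact ⟨β, β', fun _ => ⟨h1, h2, h3⟩⟩
    · exact ⟨0, 0, fun hc => absurd hc h⟩
  choose B B' hB using hchoice
  set y := ∑ α ∈ g.support,
    ((monomial (B α + B α)) (1:ℝ) + (monomial (B' α + B' α)) (1:ℝ)) with hy
  have hycone : y ∈ sosFormsCone n m := by
    refine ⟨g.support.val.map (fun α => (monomial (B α)) (1:ℝ))
      + g.support.val.map (fun α => (monomial (B' α)) (1:ℝ)), ?_, ?_⟩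
    · intro q hq
      rw [Multiset.mem_add] at hq
      rcases hq with h | h
      · rw [Multiset.mem_map] at h
        obtain ⟨α, hα, rfl⟩ := h
        exact isHomogeneous_monomial _ (hB α (hgsupp α hα)).1
      · rw [Multiset.mem_map] at h
        obtain ⟨α, hα, rfl⟩ := h
        exact isHomogeneous_monomial _ (hB α (hgsupp α hα)).2.1
    · rw [hy, Finset.sum_eq_multiset_sum, Multiset.map_add, Multiset.sum_add,
        Multiset.map_map, Multiset.map_map]
      rw [← Multiset.sum_map_add]
      congr 1
      apply Multiset.map_congr rfl
      intro α _
      simp only [Function.comp_apply, MvPolynomial.monomial_pow, one_pow, two_nsmul]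
  obtain ⟨μ, hμ, hz⟩ := hrint.2 y hycone
  have hμpos : (0:ℝ) < μ := by linarith
  have hμ0 : μ ≠ 0 := hμpos.ne'
  set z := μ • F2 + (1 - μ) • y with hzdef
  set δ := 1 - μ⁻¹ with hδdef
  have hδpos : 0 < δ := by
    have h1 : μ⁻¹ < 1 := by
      rw [inv_lt_one_iff₀]
      right
      exact hμ
    rw [hδdef]
    linarith
  have hfeq : f = μ⁻¹ • z + ∑ α ∈ g.support,
      (δ • ((monomial (B α + B α)) (1:ℝ) + (monomial (B' α + B' α)) (1:ℝ))
        + (monomial α) (MvPolynomial.coeff α g)) := by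
    have hsum : ∑ α ∈ g.support,
        (δ • ((monomial (B α + B α)) (1:ℝ) + (monomial (B' α + B' α)) (1:ℝ))
          + (monomial α) (MvPolynomial.coeff α g)) = δ • y + g := by
      rw [Finset.sum_add_distrib, ← Finset.smul_sum, ← hy,
        MvPolynomial.support_sum_monomial_coeff]
    rw [hsum, hzdef, smul_add, smul_smul, smul_smul, inv_mul_cancel₀ hμ0, one_smul]
    have hco : μ⁻¹ * (1 - μ) = -δ := by
      rw [hδdef]
      field_simp
      ring
    rw [hco, hg, neg_smul]
    abel
  rw [hfeq, MvPolynomial.coe_add]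
  refine IsSumSq.add ?_ ?_
  · rw [MvPolynomial.smul_eq_C_mul, MvPolynomial.coe_mul, MvPolynomial.coe_C]
    refine IsSumSq.mul'' (IsSquare.isSumSq'' ⟨MvPowerSeries.C (σ := Fin n) (R := ℝ) (Real.sqrt μ⁻¹), ?_⟩)
      (cone_coe_isSumSq hz)
    rw [← map_mul, Real.mul_self_sqrt (inv_nonneg.mpr hμpos.le)]
  · have hcs : ((∑ α ∈ g.support,
        (δ • ((monomial (B α + B α)) (1:ℝ) + (monomial (B' α + B' α)) (1:ℝ))
          + (monomial α) (MvPolynomial.coeff α g)) : MvPolynomial (Fin n) ℝ)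
            : MvPowerSeries (Fin n) ℝ)
        = ∑ α ∈ g.support,
          ((δ • ((monomial (B α + B α)) (1:ℝ) + (monomial (B' α + B' α)) (1:ℝ))
            + (monomial α) (MvPolynomial.coeff α g) : MvPolynomial (Fin n) ℝ)
              : MvPowerSeries (Fin n) ℝ) := by
      rw [← MvPolynomial.coeToMvPowerSeries.ringHom_apply, map_sum]
      simp only [MvPolynomial.coeToMvPowerSeries.ringHom_apply]
    rw [hcs]
    refine Finset.sum_induction _ _ (fun a b ha hb => IsSumSq.add ha hb) IsSumSq.zero ?_
    intro α hα
    exact (hB α (hgsupp α hα)).2.2 (MvPolynomial.coeff α g) δ hδpos
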